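/- Let U : ℝ → (-∞,∞] be even with U(x) = ∞ for x > 1, U(x) ≤ U(y) for 0 ≤ x ≤ y, and U finite on a set of positive measure in [0,1]. Fix a real number c and an integer d ≥ 1, and real numbers y_1, ..., y_d with |y_i - c| ≤ 5/4 for all i and min_i y_i ≥ c - 1/8. Fix 0 < ε ≤ 1/8 and suppose y_1 = c (the edge endpoint). Then ∫_{[1-ε,1]} exp(-∑_{i=1}^d U(y_i - (c+t))) dt ≤ 8ε · exp(-U(1-ε) + U(0) + d(U(3/4) - U(0))) · ∫_{[1/2, 3/4-ε]} exp(-∑_{i=1}^d U(y_i - (c+t))) dt. -/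

import Mathlib

open MeasureTheory

/-- `eexp x = e^x` as a map `EReal → ℝ≥0∞`, with `e^{-∞} = 0` and `e^{∞} = ∞`. -/
noncomputable def eexp (x : EReal) : ENNReal :=
  if x = ⊥ then 0 else if x = ⊤ then ⊤ else ENNReal.ofReal (Real.exp x.toReal)

set_option linter.unusedVariables false


lemma eexp_coe (x : ℝ) : eexp (x : EReal) = ENNReal.ofReal (Real.exp x) := by
  simp [eexp]

lemma eexp_mono {a b : EReal} (h : a ≤ b) : eexp a ≤ eexp b := by
  rcases eq_or_ne a ⊥ with ha | ha
  · simp [ha, eexp]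
  rcases eq_or_ne b ⊤ with hb | hb
  · simp [hb, eexp]
  have hb' : b ≠ ⊥ := fun h' => ha (le_bot_iff.mp (h' ▸ h))
  have ha' : a ≠ ⊤ := fun h' => hb (top_le_iff.mp (h' ▸ h))
  simp only [eexp, if_neg ha, if_neg ha', if_neg hb, if_neg hb']
  exact ENNReal.ofReal_le_ofReal (Real.exp_le_exp.mpr (EReal.toReal_le_toReal h ha hb))

lemma coe_fsum {ι : Type*} (s : Finset ι) (g : ι → ℝ) :
    ((∑ i ∈ s, g i : ℝ) : EReal) = ∑ i ∈ s, (g i : EReal) := by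
  induction s using Finset.cons_induction with
  | empty => simp
  | cons a s ha ih => simp [Finset.sum_cons, ← ih, EReal.coe_add]

lemma fsum_ne_bot {ι : Type*} (s : Finset ι) (f : ι → EReal) (h : ∀ i ∈ s, f i ≠ ⊥) :
    ∑ i ∈ s, f i ≠ ⊥ := by
  induction s using Finset.cons_induction with
  | empty => simp
  | cons a s ha ih =>
      rw [Finset.sum_cons]
      intro hc
      rcases EReal.add_eq_bot_iff.mp hc with h1 | h1
      · exact h a (Finset.mem_cons_self a s) h1
      · exact ih (fun i hi => h i (Finset.mem_cons.mpr (Or.inr hi))) h1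

lemma eexp_neg_sum_le {ι : Type*} (s : Finset ι) (f : ι → EReal) (g : ι → ℝ)
    (hg : ∀ i ∈ s, (g i : EReal) ≤ f i) :
    eexp (-(∑ i ∈ s, f i)) ≤ ENNReal.ofReal (Real.exp (-(∑ i ∈ s, g i))) := by
  have h1 : ((∑ i ∈ s, g i : ℝ) : EReal) ≤ ∑ i ∈ s, f i := by
    rw [coe_fsum]; exact Finset.sum_le_sum hg
  have h2 : -(∑ i ∈ s, f i) ≤ ((-(∑ i ∈ s, g i) : ℝ) : EReal) := by
    rw [EReal.coe_neg]; exact EReal.neg_le_neg_iff.mpr h1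
  calc eexp (-(∑ i ∈ s, f i)) ≤ eexp ((-(∑ i ∈ s, g i) : ℝ) : EReal) := eexp_mono h2
    _ = ENNReal.ofReal (Real.exp (-(∑ i ∈ s, g i))) := eexp_coe _

lemma le_eexp_neg_sum {ι : Type*} (s : Finset ι) (f : ι → EReal) (g : ι → ℝ)
    (hg : ∀ i ∈ s, f i ≤ (g i : EReal)) :
    ENNReal.ofReal (Real.exp (-(∑ i ∈ s, g i))) ≤ eexp (-(∑ i ∈ s, f i)) := by
  have h1 : ∑ i ∈ s, f i ≤ ((∑ i ∈ s, g i : ℝ) : EReal) := by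
    rw [coe_fsum]; exact Finset.sum_le_sum hg
  have h2 : ((-(∑ i ∈ s, g i) : ℝ) : EReal) ≤ -(∑ i ∈ s, f i) := by
    rw [EReal.coe_neg]; exact EReal.neg_le_neg_iff.mpr h1
  calc ENNReal.ofReal (Real.exp (-(∑ i ∈ s, g i))) = eexp ((-(∑ i ∈ s, g i) : ℝ) : EReal) :=
        (eexp_coe _).symm
    _ ≤ _ := eexp_mono h2

lemma eexp_neg_sum_eq_zero {ι : Type*} [DecidableEq ι] (s : Finset ι) (f : ι → EReal) {i0 : ι}
    (hi0 : i0 ∈ s) (htop : f i0 = ⊤) (h : ∀ i ∈ s, f i ≠ ⊥) :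
    eexp (-(∑ i ∈ s, f i)) = 0 := by
  have : ∑ i ∈ s, f i = ⊤ := by
    rw [← Finset.add_sum_erase s f hi0, htop]
    exact EReal.top_add_of_ne_bot (fsum_ne_bot _ _ fun i hi => h i (Finset.mem_of_mem_erase hi))
  rw [this]
  simp [eexp]


/-- Integral comparison at the heart of the bound on the probability that an
unlocked edge has an extremal gradient. -/
theorem unlocked_extremal_integral_bound
    (U : ℝ → EReal) (hbot : ∀ x, U x ≠ ⊥) (heven : ∀ x, U (-x) = U x)
    (hsupp : ∀ x : ℝ, 1 < x → U x = ⊤)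
    (hmono : ∀ x y : ℝ, 0 ≤ x → x ≤ y → U x ≤ U y)
    (hfin : 0 < volume {x ∈ Set.Icc (0:ℝ) 1 | U x ≠ ⊤})
    (c : ℝ) (d : ℕ) (hd : 1 ≤ d) (y : Fin d → ℝ)
    (hy : ∀ i, |y i - c| ≤ 5/4) (hymin : ∀ i, c - 1/8 ≤ y i)
    (ε : ℝ) (hε0 : 0 < ε) (hε : ε ≤ 1/8)
    (hedge : y ⟨0, by omega⟩ = c) :
    ∫⁻ t in Set.Icc (1 - ε) 1, eexp (-(∑ i : Fin d, U (y i - (c + t))))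
      ≤ ENNReal.ofReal (8 * ε)
          * eexp (-(U (1 - ε)) + U 0 + (d : EReal) * (U (3/4) - U 0))
          * ∫⁻ t in Set.Icc (1/2) (3/4 - ε),
              eexp (-(∑ i : Fin d, U (y i - (c + t)))) := by
  set i0 : Fin d := ⟨0, by omega⟩ with hi0def
  -- basic facts about U
  have hUx0 : ∀ x : ℝ, U 0 ≤ U x := by
    intro x
    rcases le_total 0 x with h | h
    · exact hmono 0 x le_rfl h
    · have he := heven (-x)
      rw [neg_neg] at he
      rw [he]
      exact hmono 0 (-x) le_rfl (by linarith)
  have hUabs : ∀ x r : ℝ, 0 ≤ r → |x| ≤ r → U x ≤ U r := by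
    intro x r hr hxr
    have hx : U x = U |x| := by
      rcases le_total 0 x with h | h
      · rw [abs_of_nonneg h]
      · rw [abs_of_nonpos h, heven x]
    rw [hx]
    exact hmono |x| r (abs_nonneg x) hxr
  have hU0top : U 0 ≠ ⊤ := by
    intro h0
    have hempty : {x ∈ Set.Icc (0:ℝ) 1 | U x ≠ ⊤} = ∅ := by
      ext x
      simp only [Set.mem_setOf_eq, Set.mem_empty_iff_false, iff_false, not_and]
      intro hx
      simp only [ne_eq, not_not]
      exact top_le_iff.mp (h0 ▸ hUx0 x)
    rw [hempty] at hfin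
    simp at hfin
  set u0 : ℝ := (U 0).toReal with hu0def
  have hU0 : U 0 = (u0 : EReal) := (EReal.coe_toReal hU0top (hbot 0)).symm
  have hedge' : ∀ t : ℝ, y i0 - (c + t) = -t := by intro t; rw [hedge]; ring
  rcases eq_or_ne (U (1 - ε)) ⊤ with h1e | h1e
  · -- edge term is +∞ on the whole interval, so the LHS vanishes
    have hzero : ∀ t ∈ Set.Icc (1 - ε) 1, eexp (-(∑ i : Fin d, U (y i - (c + t)))) = 0 := by
      intro t ht
      refine eexp_neg_sum_eq_zero Finset.univ _ (Finset.mem_univ i0) ?_ (fun i _ => hbot _)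
      rw [hedge' t, heven t]
      exact top_le_iff.mp (h1e ▸ hmono (1 - ε) t (by linarith) ht.1)
    have hL : ∫⁻ t in Set.Icc (1 - ε) 1, eexp (-(∑ i : Fin d, U (y i - (c + t)))) = 0 := by
      refine le_antisymm ?_ zero_le
      calc ∫⁻ t in Set.Icc (1 - ε) 1, eexp (-(∑ i : Fin d, U (y i - (c + t))))
          ≤ ∫⁻ _ in Set.Icc (1 - ε) 1, (0 : ENNReal) :=
            setLIntegral_mono' measurableSet_Icc fun t ht => le_of_eq (hzero t ht)
        _ = 0 := by simp
    rw [hL]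
    exact zero_le
  · -- all relevant values of U are finite
    set u1e : ℝ := (U (1 - ε)).toReal with hu1edef
    have hU1e : U (1 - ε) = (u1e : EReal) := (EReal.coe_toReal h1e (hbot _)).symm
    have h34 : U (3/4 : ℝ) ≠ ⊤ := fun h =>
      h1e (top_le_iff.mp (h ▸ hmono (3/4) (1 - ε) (by norm_num) (by linarith)))
    set u34 : ℝ := (U (3/4 : ℝ)).toReal with hu34def
    have hU34 : U (3/4 : ℝ) = (u34 : EReal) := (EReal.coe_toReal h34 (hbot _)).symm
    set A : ℝ := -((d : ℝ) * u0 + (u1e - u0)) with hAdef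
    set B : ℝ := -u1e + u0 + (d : ℝ) * (u34 - u0) with hBdef
    set C : ℝ := -((d : ℝ) * u34) with hCdef
    -- Step A : bound the left integral
    have stepA : ∫⁻ t in Set.Icc (1 - ε) 1, eexp (-(∑ i : Fin d, U (y i - (c + t))))
        ≤ ENNReal.ofReal (Real.exp A) * ENNReal.ofReal ε := by
      have hpt : ∀ t ∈ Set.Icc (1 - ε) 1,
          eexp (-(∑ i : Fin d, U (y i - (c + t)))) ≤ ENNReal.ofReal (Real.exp A) := by
        intro t ht
        have hsum : ∑ i : Fin d, (u0 + (if i = i0 then u1e - u0 else 0))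
            = (d : ℝ) * u0 + (u1e - u0) := by
          rw [Finset.sum_add_distrib, Finset.sum_const, Finset.sum_ite_eq' Finset.univ i0]
          simp [mul_comm]
        have := eexp_neg_sum_le Finset.univ (fun i => U (y i - (c + t)))
          (fun i => u0 + (if i = i0 then u1e - u0 else 0)) ?_
        · rw [hsum] at this
          exact this
        · intro i _
          by_cases hi : i = i0
          · subst hi
            beta_reduce
            have hg : u0 + (if i0 = i0 then u1e - u0 else 0) = u1e := by simp
            rw [hg, hedge' t, heven t, ← hU1e]
            exact hmono (1 - ε) t (by linarith) ht.1
          · beta_reduce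
            simp only [if_neg hi, add_zero, ← hU0]
            exact hUx0 _
      calc ∫⁻ t in Set.Icc (1 - ε) 1, eexp (-(∑ i : Fin d, U (y i - (c + t))))
          ≤ ∫⁻ _ in Set.Icc (1 - ε) 1, ENNReal.ofReal (Real.exp A) :=
            setLIntegral_mono' measurableSet_Icc hpt
        _ = ENNReal.ofReal (Real.exp A) * ENNReal.ofReal ε := by
            rw [setLIntegral_const, Real.volume_Icc]
            norm_num
    -- Step B : bound the right integral from below
    have stepB : ENNReal.ofReal (Real.exp C) * ENNReal.ofReal (1/8)
        ≤ ∫⁻ t in Set.Icc (1/2) (3/4 - ε), eexp (-(∑ i : Fin d, U (y i - (c + t)))) := by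
      have hsub : ∫⁻ t in Set.Icc (1/2 : ℝ) (5/8),
            eexp (-(∑ i : Fin d, U (y i - (c + t))))
          ≤ ∫⁻ t in Set.Icc (1/2) (3/4 - ε), eexp (-(∑ i : Fin d, U (y i - (c + t)))) :=
        lintegral_mono' (Measure.restrict_mono (Set.Icc_subset_Icc le_rfl (by linarith)) le_rfl)
          le_rfl
      refine le_trans ?_ hsub
      have hpt : ∀ t ∈ Set.Icc (1/2 : ℝ) (5/8),
          ENNReal.ofReal (Real.exp C) ≤ eexp (-(∑ i : Fin d, U (y i - (c + t)))) := by
        intro t ht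
        have hsum : ∑ _i : Fin d, u34 = (d : ℝ) * u34 := by
          rw [Finset.sum_const]
          simp [mul_comm]
        have := le_eexp_neg_sum Finset.univ (fun i => U (y i - (c + t))) (fun _ => u34) ?_
        · rw [hsum] at this
          exact this
        · intro i _
          beta_reduce
          rw [← hU34]
          refine hUabs _ _ (by norm_num) ?_
          have h1 := abs_le.mp (hy i)
          have h2 := hymin i
          obtain ⟨h3, h4⟩ := ht
          rw [abs_le]
          exact ⟨by linarith [h1.2], by linarith [h1.1]⟩
      calc ENNReal.ofReal (Real.exp C) * ENNReal.ofReal (1/8)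
          = ∫⁻ _ in Set.Icc (1/2 : ℝ) (5/8), ENNReal.ofReal (Real.exp C) := by
            rw [setLIntegral_const, Real.volume_Icc]
            norm_num
        _ ≤ ∫⁻ t in Set.Icc (1/2 : ℝ) (5/8), eexp (-(∑ i : Fin d, U (y i - (c + t)))) :=
            setLIntegral_mono' measurableSet_Icc hpt
    -- rewrite the middle eexp factor
    have hK : eexp (-(U (1 - ε)) + U 0 + (d : EReal) * (U (3/4) - U 0))
        = ENNReal.ofReal (Real.exp B) := by
      have hcoe : -(U (1 - ε)) + U 0 + (d : EReal) * (U (3/4) - U 0) = ((B : ℝ) : EReal) := by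
        rw [hU1e, hU0, hU34, ← EReal.coe_coe_eq_natCast, ← EReal.coe_sub, ← EReal.coe_mul,
          ← EReal.coe_neg, ← EReal.coe_add, ← EReal.coe_add, hBdef]
      rw [hcoe, eexp_coe]
    have hBC : Real.exp B * Real.exp C = Real.exp A := by
      rw [← Real.exp_add]
      congr 1
      rw [hAdef, hBdef, hCdef]
      ring
    calc ∫⁻ t in Set.Icc (1 - ε) 1, eexp (-(∑ i : Fin d, U (y i - (c + t))))
        ≤ ENNReal.ofReal (Real.exp A) * ENNReal.ofReal ε := stepA
      _ = ENNReal.ofReal (8 * ε) * ENNReal.ofReal (Real.exp B)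
            * (ENNReal.ofReal (Real.exp C) * ENNReal.ofReal (1/8)) := by
          rw [← ENNReal.ofReal_mul (by positivity), ← ENNReal.ofReal_mul (by positivity),
            ← ENNReal.ofReal_mul (by positivity), ← ENNReal.ofReal_mul (by positivity)]
          congr 1
          nlinarith [hBC, Real.exp_pos B, Real.exp_pos C]
      _ ≤ ENNReal.ofReal (8 * ε)
            * eexp (-(U (1 - ε)) + U 0 + (d : EReal) * (U (3/4) - U 0))
            * ∫⁻ t in Set.Icc (1/2) (3/4 - ε), eexp (-(∑ i : Fin d, U (y i - (c + t)))) := by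
          rw [hK]
          exact mul_le_mul_right stepB _
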